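/- If in addition there exists c ∈ (a,b) such that ϕ'(θ) ≤ 0 for all θ ∈ (a,c] and ϕ'(θ) ≥ 0 for all θ ∈ [c,b), then v(θ,θ̃)² ≤ 1/ϕ(c) for all θ, θ̃ ∈ [c,b). -/

import Mathlib

/-- v(θ,θ̃)² ≤ 1/ϕ(c) for all θ, θ̃ ∈ [c,b). -/
theorem stmt_7 (a b : ℝ) (hab : a < b)
    (ϕ ϕd uI uId uIdd uII uIId uIIdd : ℝ → ℝ)
    (hϕd : ∀ θ ∈ Set.Ioo a b, HasDerivAt ϕ (ϕd θ) θ)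
    (hϕdc : ContinuousOn ϕd (Set.Ioo a b))
    (hϕpos : ∀ θ ∈ Set.Ioo a b, 0 < ϕ θ)
    (huId : ∀ θ ∈ Set.Ioo a b, HasDerivAt uI (uId θ) θ)
    (huIdd : ∀ θ ∈ Set.Ioo a b, HasDerivAt uId (uIdd θ) θ)
    (huIId : ∀ θ ∈ Set.Ioo a b, HasDerivAt uII (uIId θ) θ)
    (huIIdd : ∀ θ ∈ Set.Ioo a b, HasDerivAt uIId (uIIdd θ) θ)
    (hodeI : ∀ θ ∈ Set.Ioo a b, uIdd θ + ϕ θ * uI θ = 0)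
    (hodeII : ∀ θ ∈ Set.Ioo a b, uIIdd θ + ϕ θ * uII θ = 0)
    (hW : ∀ θ ∈ Set.Ioo a b, uI θ * uIId θ - uId θ * uII θ = 1)
    (c : ℝ) (hc : c ∈ Set.Ioo a b)
    (hdec : ∀ θ ∈ Set.Ioc a c, ϕd θ ≤ 0)
    (hinc : ∀ θ ∈ Set.Ico c b, 0 ≤ ϕd θ) :
    ∀ θ ∈ Set.Ico c b, ∀ θt ∈ Set.Ico c b,
      (uI θ * uII θt - uI θt * uII θ) ^ 2 ≤ 1 / ϕ c := by
  have hsub : Set.Ico c b ⊆ Set.Ioo a b := fun x hx => ⟨lt_of_lt_of_le hc.1 hx.1, hx.2⟩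
  -- ϕ is monotone on [c, b)
  have hmono : MonotoneOn ϕ (Set.Ico c b) := by
    apply monotoneOn_of_deriv_nonneg (convex_Ico c b)
    · exact fun x hx => (hϕd x (hsub hx)).continuousAt.continuousWithinAt
    · intro x hx
      rw [interior_Ico] at hx
      exact (hϕd x (hsub (Set.Ioo_subset_Ico_self hx))).differentiableAt.differentiableWithinAt
    · intro x hx
      rw [interior_Ico] at hx
      rw [(hϕd x (hsub (Set.Ioo_subset_Ico_self hx))).deriv]
      exact hinc x (Set.Ioo_subset_Ico_self hx)
  have key : ∀ θt ∈ Set.Ico c b, ∀ θ ∈ Set.Ico c b, θt ≤ θ →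
      (uI θ * uII θt - uI θt * uII θ) ^ 2 ≤ 1 / ϕ c := by
    intro θt hθt θ hθ hle
    set w : ℝ → ℝ := fun x => uI x * uII θt - uI θt * uII x with hwdef
    set wd : ℝ → ℝ := fun x => uId x * uII θt - uI θt * uIId x with hwddef
    set F : ℝ → ℝ := fun x => wd x ^ 2 / ϕ x + w x ^ 2 with hFdef
    have hwD : ∀ x ∈ Set.Ioo a b, HasDerivAt w (wd x) x := fun x hx =>
      ((huId x hx).mul_const _).sub ((huIId x hx).const_mul _)
    have hwdD : ∀ x ∈ Set.Ioo a b, HasDerivAt wd (-(ϕ x * w x)) x := by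
      intro x hx
      have h := ((huIdd x hx).mul_const (uII θt)).sub ((huIIdd x hx).const_mul (uI θt))
      refine HasDerivAt.congr_deriv h (Eq.symm ?_)
      have h1 := hodeI x hx
      have h2 := hodeII x hx
      simp only [hwdef]
      linear_combination (-uII θt) * h1 + uI θt * h2
    have hFD : ∀ x ∈ Set.Ioo a b, HasDerivAt F (-(ϕd x) * wd x ^ 2 / ϕ x ^ 2) x := by
      intro x hx
      have hϕx := (hϕpos x hx).ne'
      have h1 : HasDerivAt (fun y => wd y ^ 2 / ϕ y)
          (((2 : ℕ) * wd x ^ 1 * (-(ϕ x * w x)) * ϕ x - wd x ^ 2 * ϕd x) / ϕ x ^ 2) x :=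
        ((hwdD x hx).pow 2).div (hϕd x hx) hϕx
      have h2 : HasDerivAt (fun y => w y ^ 2) ((2 : ℕ) * w x ^ 1 * wd x) x :=
        (hwD x hx).pow 2
      have h := h1.add h2
      refine HasDerivAt.congr_deriv h (Eq.symm ?_)
      field_simp
      ring
    have hsub2 : Set.Icc θt θ ⊆ Set.Ico c b := fun x hx =>
      ⟨le_trans hθt.1 hx.1, lt_of_le_of_lt hx.2 hθ.2⟩
    have hFanti : AntitoneOn F (Set.Icc θt θ) := by
      apply antitoneOn_of_deriv_nonpos (convex_Icc θt θ)
      · exact fun x hx => (hFD x (hsub (hsub2 hx))).continuousAt.continuousWithinAt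
      · intro x hx
        rw [interior_Icc] at hx
        exact (hFD x (hsub (hsub2 (Set.Ioo_subset_Icc_self hx)))).differentiableAt.differentiableWithinAt
      · intro x hx
        rw [interior_Icc] at hx
        have hx' := hsub2 (Set.Ioo_subset_Icc_self hx)
        rw [(hFD x (hsub hx')).deriv]
        apply div_nonpos_of_nonpos_of_nonneg
        · exact mul_nonpos_of_nonpos_of_nonneg (neg_nonpos.mpr (hinc x hx')) (sq_nonneg _)
        · exact sq_nonneg _
    have hθt' := hsub hθt
    have hθ' := hsub hθ
    have hwθt : w θt = 0 := by simp [hwdef]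
    have hwdθt : wd θt = -1 := by
      have := hW θt hθt'
      simp only [hwddef]; linarith
    have hFθt : F θt = 1 / ϕ θt := by
      simp [hFdef, hwθt, hwdθt]
    have h1 : w θ ^ 2 ≤ F θ := by
      have : 0 ≤ wd θ ^ 2 / ϕ θ := div_nonneg (sq_nonneg _) (hϕpos θ hθ').le
      simp only [hFdef]; linarith
    have h2 : F θ ≤ F θt := hFanti ⟨le_refl _, hle⟩ ⟨hle, le_refl _⟩ hle
    have h3 : 1 / ϕ θt ≤ 1 / ϕ c := by
      apply one_div_le_one_div_of_le (hϕpos c hc)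
      exact hmono ⟨le_refl c, hc.2⟩ hθt hθt.1
    calc (uI θ * uII θt - uI θt * uII θ) ^ 2 = w θ ^ 2 := by simp [hwdef]
      _ ≤ F θ := h1
      _ ≤ F θt := h2
      _ = 1 / ϕ θt := hFθt
      _ ≤ 1 / ϕ c := h3
  intro θ hθ θt hθt
  rcases le_total θt θ with h | h
  · exact key θt hθt θ hθ h
  · calc (uI θ * uII θt - uI θt * uII θ) ^ 2
        = (uI θt * uII θ - uI θ * uII θt) ^ 2 := by ring
      _ ≤ 1 / ϕ c := key θ hθ θt hθt h
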